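/- Let Z be a bounded operator on a complex Hilbert space 𝒵 such that Z* is pointwise stable, and let B : 𝒴 → 𝒵 be a bounded operator. Suppose P is a bounded operator on 𝒵 satisfying the Stein equation P = Z P Z* + B B*. Then P is the only solution of this Stein equation, and for every z ∈ 𝒵 the series Σ_{n≥0} Zⁿ B B* (Z*)ⁿ z converges in norm to P z; in particular ⟨P z, z⟩ = Σ_{n≥0} ‖B*(Z*)ⁿ z‖² for every z ∈ 𝒵. -/

import Mathlib

open ContinuousLinearMap Filter Topology RCLike

lemma pos_op_cauchy_schwarz {E : Type*} [NormedAddCommGroup E] [InnerProductSpace ℂ E]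
    [CompleteSpace E] (A C : E →L[ℂ] E) (hA : A.IsPositive)
    (hAC : ∀ w : E, re (inner ℂ (A w) w : ℂ) ≤ re (inner ℂ (C w) w : ℂ)) (x : E) :
    ‖A x‖ ^ 2 ≤ ‖C‖ * re (inner ℂ (A x) x : ℂ) := by
  have hsa : ∀ u v : E, (inner ℂ (A u) v : ℂ) = inner ℂ u (A v) := by
    intro u v
    nth_rewrite 1 [← hA.isSelfAdjoint.adjoint_eq]
    exact adjoint_inner_left A v u
  let core : PreInnerProductSpace.Core ℂ E :=
  { inner := fun u v => (inner ℂ u (A v) : ℂ)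
    conj_inner_symm := fun u v => by
      rw [← hsa v u, ← inner_conj_symm, RCLike.conj_conj]
    re_inner_nonneg := fun u => (RCLike.nonneg_iff.mp (hA.inner_nonneg_right u)).1
    add_left := fun u v w => by simp [inner_add_left]
    smul_left := fun u v r => by simp [inner_smul_left, mul_comm] }
  have cs := InnerProductSpace.Core.inner_mul_inner_self_le (𝕜 := ℂ) (F := E) (c := core) x (A x)
  have e1 : (@inner ℂ E (InnerProductSpace.Core.toPreInner' (c := core)) x (A x) : ℂ)
      = inner ℂ (A x) (A x) := by
    show (inner ℂ x (A (A x)) : ℂ) = _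
    rw [← hsa x (A x)]
  have e2 : (@inner ℂ E (InnerProductSpace.Core.toPreInner' (c := core)) (A x) x : ℂ)
      = inner ℂ (A x) (A x) := by
    show (inner ℂ (A x) (A x) : ℂ) = _
    rfl
  have e3 : (@inner ℂ E (InnerProductSpace.Core.toPreInner' (c := core)) x x : ℂ)
      = inner ℂ x (A x) := rfl
  have e4 : (@inner ℂ E (InnerProductSpace.Core.toPreInner' (c := core)) (A x) (A x) : ℂ)
      = inner ℂ (A x) (A (A x)) := rfl
  rw [e1, e2, e3, e4] at cs
  have hAx : ‖(inner ℂ (A x) (A x) : ℂ)‖ = ‖A x‖ ^ 2 := by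
    rw [inner_self_eq_norm_sq_to_K]
    simp [norm_pow]
  rw [hAx] at cs
  have h1 : re (inner ℂ x (A x) : ℂ) = re (inner ℂ (A x) x : ℂ) := inner_re_symm _ _
  have h2 : re (inner ℂ (A x) (A (A x)) : ℂ) ≤ ‖C‖ * ‖A x‖ ^ 2 := by
    have := hAC (A x)
    have hb : re (inner ℂ (C (A x)) (A x) : ℂ) ≤ ‖C‖ * ‖A x‖ ^ 2 := by
      calc re (inner ℂ (C (A x)) (A x) : ℂ) ≤ ‖C (A x)‖ * ‖A x‖ := re_inner_le_norm _ _
        _ ≤ (‖C‖ * ‖A x‖) * ‖A x‖ := by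
            have := C.le_opNorm (A x)
            nlinarith [norm_nonneg (A x)]
        _ = ‖C‖ * ‖A x‖ ^ 2 := by ring
    have hsym : re (inner ℂ (A x) (A (A x)) : ℂ) = re (inner ℂ (A (A x)) (A x) : ℂ) :=
      inner_re_symm _ _
    linarith
  rw [h1] at cs
  have hre : 0 ≤ re (inner ℂ (A x) x : ℂ) := (RCLike.nonneg_iff.mp (hA.inner_nonneg_left x)).1
  rcases eq_or_lt_of_le (sq_nonneg ‖A x‖) with h0 | h0
  · rw [← h0]
    positivity
  · have : ‖A x‖ ^ 2 * ‖A x‖ ^ 2 ≤ (‖C‖ * re (inner ℂ (A x) x : ℂ)) * ‖A x‖ ^ 2 := by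
      calc ‖A x‖ ^ 2 * ‖A x‖ ^ 2 ≤ re (inner ℂ (A x) x : ℂ) * (‖C‖ * ‖A x‖ ^ 2) := by
            nlinarith
        _ = (‖C‖ * re (inner ℂ (A x) x : ℂ)) * ‖A x‖ ^ 2 := by ring
    exact le_of_mul_le_mul_right this h0

noncomputable section

variable {𝒵 𝒴 : Type*}
  [NormedAddCommGroup 𝒵] [InnerProductSpace ℂ 𝒵] [CompleteSpace 𝒵]
  [NormedAddCommGroup 𝒴] [InnerProductSpace ℂ 𝒴] [CompleteSpace 𝒴]

set_option maxHeartbeats 1000000 in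
theorem stein_equation_controllability_solution
    (Z : 𝒵 →L[ℂ] 𝒵) (B : 𝒴 →L[ℂ] 𝒵)
    -- Z* is pointwise stable
    (hZ : ∀ h : 𝒵, Tendsto (fun n : ℕ => ((adjoint Z) ^ n) h) atTop (𝓝 0))
    (P : 𝒵 →L[ℂ] 𝒵)
    (hP : P = Z.comp (P.comp (adjoint Z)) + B.comp (adjoint B)) :
    -- uniqueness
    (∀ P' : 𝒵 →L[ℂ] 𝒵,
      P' = Z.comp (P'.comp (adjoint Z)) + B.comp (adjoint B) → P' = P) ∧
    -- the series Σₙ Zⁿ B B* (Z*)ⁿ z converges in norm to P z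
    (∀ z : 𝒵,
      Tendsto (fun N : ℕ =>
          ∑ n ∈ Finset.range N, (Z ^ n) (B ((adjoint B) (((adjoint Z) ^ n) z))))
        atTop (𝓝 (P z))) ∧
    -- ⟨P z, z⟩ = Σₙ ‖B*(Z*)ⁿ z‖²
    (∀ z : 𝒵,
      HasSum (fun n : ℕ => (‖(adjoint B) (((adjoint Z) ^ n) z)‖ ^ 2 : ℝ))
        (RCLike.re (inner ℂ (P z) z : ℂ))) := by
  set Zs := adjoint Z with hZsdef
  set Bs := adjoint B with hBsdef
  -- adjoint of Z^n
  have hadjpow : ∀ n : ℕ, adjoint (Z ^ n) = Zs ^ n := by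
    intro n
    rw [hZsdef, ← star_eq_adjoint, ← star_eq_adjoint, star_pow]
  have hadj : ∀ (n : ℕ) (x y : 𝒵), (inner ℂ ((Z ^ n) x) y : ℂ) = inner ℂ x ((Zs ^ n) y) := by
    intro n x y
    rw [← hadjpow n, adjoint_inner_right]
  have hBadj : ∀ (u : 𝒴) (v : 𝒵), (inner ℂ (B u) v : ℂ) = inner ℂ u (Bs v) := by
    intro u v
    rw [hBsdef, adjoint_inner_right]
  -- pointwise Stein equation
  have hPz : ∀ w : 𝒵, P w = Z (P (Zs w)) + B (Bs w) := by
    intro w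
    conv_lhs => rw [hP]
    rfl
  -- iterated Stein identity
  have key : ∀ (N : ℕ) (z : 𝒵), P z =
      (Z ^ N) (P ((Zs ^ N) z)) + ∑ n ∈ Finset.range N, (Z ^ n) (B (Bs ((Zs ^ n) z))) := by
    intro N
    induction N with
    | zero => intro z; simp
    | succ N ih =>
      intro z
      have h1 : (Z ^ (N + 1)) (P ((Zs ^ (N + 1)) z))
          = (Z ^ N) (Z (P (Zs ((Zs ^ N) z)))) := by
        rw [pow_succ Z, pow_succ' Zs]
        simp [mul_apply]
      rw [Finset.sum_range_succ, h1, ih z, hPz ((Zs ^ N) z), map_add]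
      abel
  -- inner ℂ product identity
  have ikey : ∀ (N : ℕ) (z : 𝒵), (inner ℂ (P z) z : ℂ) =
      inner ℂ (P ((Zs ^ N) z)) ((Zs ^ N) z)
        + ((∑ n ∈ Finset.range N, (‖Bs ((Zs ^ n) z)‖ ^ 2 : ℝ) : ℝ) : ℂ) := by
    intro N z
    conv_lhs => rw [key N z]
    rw [inner_add_left, sum_inner, hadj N (P ((Zs ^ N) z)) z]
    congr 1
    rw [Complex.ofReal_sum]
    refine Finset.sum_congr rfl fun n _ => ?_
    rw [hadj n _ z, hBadj _ _, inner_self_eq_norm_sq_to_K]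
    norm_cast
  have rkey : ∀ (N : ℕ) (z : 𝒵), re (inner ℂ (P z) z : ℂ) =
      re (inner ℂ (P ((Zs ^ N) z)) ((Zs ^ N) z) : ℂ)
        + ∑ n ∈ Finset.range N, (‖Bs ((Zs ^ n) z)‖ ^ 2 : ℝ) := by
    intro N z
    rw [ikey N z, map_add]
    simp [← Complex.ofReal_pow]
  -- boundary term tends to 0
  have hbndC : ∀ z : 𝒵,
      Tendsto (fun N : ℕ => (inner ℂ (P ((Zs ^ N) z)) ((Zs ^ N) z) : ℂ)) atTop (𝓝 0) := by
    intro z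
    have h1 : Tendsto (fun N : ℕ => (Zs ^ N) z) atTop (𝓝 0) := hZ z
    have h2 : Tendsto (fun N : ℕ => P ((Zs ^ N) z)) atTop (𝓝 (P 0)) :=
      (P.continuous.tendsto 0).comp h1
    have := h2.inner (𝕜 := ℂ) h1
    simpa using this
  have hbnd : ∀ z : 𝒵,
      Tendsto (fun N : ℕ => re (inner ℂ (P ((Zs ^ N) z)) ((Zs ^ N) z) : ℂ)) atTop (𝓝 0) := by
    intro z
    have := (Complex.continuous_re.tendsto 0).comp (hbndC z)
    simpa [Function.comp_def] using this
  -- partial sums tend to re ⟪P z, z⟫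
  have hps : ∀ z : 𝒵,
      Tendsto (fun N : ℕ => ∑ n ∈ Finset.range N, (‖Bs ((Zs ^ n) z)‖ ^ 2 : ℝ)) atTop
        (𝓝 (re (inner ℂ (P z) z : ℂ))) := by
    intro z
    have heq : (fun N : ℕ => ∑ n ∈ Finset.range N, (‖Bs ((Zs ^ n) z)‖ ^ 2 : ℝ))
        = fun N : ℕ => re (inner ℂ (P z) z : ℂ)
          - re (inner ℂ (P ((Zs ^ N) z)) ((Zs ^ N) z) : ℂ) := by
      funext N
      have := rkey N z
      linarith
    rw [heq]
    simpa using tendsto_const_nhds.sub (hbnd z)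
  -- Part 3: HasSum
  have part3 : ∀ z : 𝒵,
      HasSum (fun n : ℕ => (‖Bs ((Zs ^ n) z)‖ ^ 2 : ℝ)) (re (inner ℂ (P z) z : ℂ)) := by
    intro z
    have hmono : Monotone (fun N : ℕ => ∑ n ∈ Finset.range N, (‖Bs ((Zs ^ n) z)‖ ^ 2 : ℝ)) := by
      apply monotone_nat_of_le_succ
      intro N
      rw [Finset.sum_range_succ]
      nlinarith [sq_nonneg ‖Bs ((Zs ^ N) z)‖]
    have hle : ∀ N : ℕ, ∑ n ∈ Finset.range N, (‖Bs ((Zs ^ n) z)‖ ^ 2 : ℝ)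
        ≤ re (inner ℂ (P z) z : ℂ) := hmono.ge_of_tendsto (hps z)
    have hsum : Summable (fun n : ℕ => (‖Bs ((Zs ^ n) z)‖ ^ 2 : ℝ)) :=
      summable_of_sum_range_le (fun n => sq_nonneg _) hle
    have h1 := hsum.hasSum
    have h2 := h1.tendsto_sum_nat
    have := tendsto_nhds_unique h2 (hps z)
    rwa [this] at h1
  -- P is positive
  have hposre : ∀ w : 𝒵, 0 ≤ re (inner ℂ (P w) w : ℂ) := by
    intro w
    refine ge_of_tendsto (hps w) (Eventually.of_forall fun N => ?_)
    exact Finset.sum_nonneg fun n _ => sq_nonneg _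
  have hreal : ∀ w : 𝒵, (inner ℂ (P w) w : ℂ) = ((re (inner ℂ (P w) w : ℂ) : ℝ) : ℂ) := by
    intro w
    have t1 : Tendsto (fun N : ℕ =>
        ((∑ n ∈ Finset.range N, (‖Bs ((Zs ^ n) w)‖ ^ 2 : ℝ) : ℝ) : ℂ)) atTop
        (𝓝 (inner ℂ (P w) w)) := by
      have heq : (fun N : ℕ =>
          ((∑ n ∈ Finset.range N, (‖Bs ((Zs ^ n) w)‖ ^ 2 : ℝ) : ℝ) : ℂ))
          = fun N : ℕ => (inner ℂ (P w) w : ℂ) - inner ℂ (P ((Zs ^ N) w)) ((Zs ^ N) w) := by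
        funext N
        have := ikey N w
        rw [this]
        ring
      rw [heq]
      simpa using tendsto_const_nhds.sub (hbndC w)
    have t2 : Tendsto (fun N : ℕ =>
        ((∑ n ∈ Finset.range N, (‖Bs ((Zs ^ n) w)‖ ^ 2 : ℝ) : ℝ) : ℂ)) atTop
        (𝓝 ((re (inner ℂ (P w) w : ℂ) : ℝ) : ℂ)) :=
      (Complex.continuous_ofReal.tendsto _).comp (hps w)
    exact tendsto_nhds_unique t1 t2
  have hPsym : IsSelfAdjoint P := by
    rw [ContinuousLinearMap.isSelfAdjoint_iff_isSymmetric]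
    rw [LinearMap.isSymmetric_iff_inner_map_self_real]
    intro v
    show (starRingEnd ℂ) (inner ℂ (P v) v : ℂ) = (inner ℂ (P v) v : ℂ)
    rw [hreal v, Complex.conj_ofReal]
  have hPpos : P.IsPositive := by
    refine ⟨ContinuousLinearMap.isSelfAdjoint_iff_isSymmetric.mp hPsym, fun w => ?_⟩
    exact hposre w
  -- T_N := Z^N P Zs^N is positive and dominated by P
  have hTpos : ∀ N : ℕ, ((Z ^ N) ∘L P ∘L (Zs ^ N)).IsPositive := by
    intro N
    have := hPpos.conj_adjoint (Z ^ N)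
    rwa [hadjpow N] at this
  have hTle : ∀ (N : ℕ) (w : 𝒵),
      re (inner ℂ (((Z ^ N) ∘L P ∘L (Zs ^ N)) w) w : ℂ) ≤ re (inner ℂ (P w) w : ℂ) := by
    intro N w
    have he : (inner ℂ (((Z ^ N) ∘L P ∘L (Zs ^ N)) w) w : ℂ)
        = inner ℂ (P ((Zs ^ N) w)) ((Zs ^ N) w) := by
      show (inner ℂ ((Z ^ N) (P ((Zs ^ N) w))) w : ℂ) = _
      rw [hadj N]
    rw [he, rkey N w]
    have : 0 ≤ ∑ n ∈ Finset.range N, (‖Bs ((Zs ^ n) w)‖ ^ 2 : ℝ) :=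
      Finset.sum_nonneg fun n _ => sq_nonneg _
    linarith
  -- Part 2: norm convergence
  have part2 : ∀ z : 𝒵,
      Tendsto (fun N : ℕ => ∑ n ∈ Finset.range N, (Z ^ n) (B (Bs ((Zs ^ n) z))))
        atTop (𝓝 (P z)) := by
    intro z
    have hTz : Tendsto (fun N : ℕ => ((Z ^ N) ∘L P ∘L (Zs ^ N)) z) atTop (𝓝 0) := by
      rw [tendsto_zero_iff_norm_tendsto_zero]
      have hub : ∀ N : ℕ, ‖((Z ^ N) ∘L P ∘L (Zs ^ N)) z‖
          ≤ Real.sqrt (‖P‖ * re (inner ℂ (P ((Zs ^ N) z)) ((Zs ^ N) z) : ℂ)) := by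
        intro N
        have hb := pos_op_cauchy_schwarz ((Z ^ N) ∘L P ∘L (Zs ^ N)) P (hTpos N) (hTle N) z
        have he : re (inner ℂ (((Z ^ N) ∘L P ∘L (Zs ^ N)) z) z : ℂ)
            = re (inner ℂ (P ((Zs ^ N) z)) ((Zs ^ N) z) : ℂ) := by
          congr 1
          show (inner ℂ ((Z ^ N) (P ((Zs ^ N) z))) z : ℂ) = _
          rw [hadj N]
        rw [he] at hb
        calc ‖((Z ^ N) ∘L P ∘L (Zs ^ N)) z‖
            = Real.sqrt (‖((Z ^ N) ∘L P ∘L (Zs ^ N)) z‖ ^ 2) := by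
              rw [Real.sqrt_sq (norm_nonneg _)]
          _ ≤ Real.sqrt (‖P‖ * re (inner ℂ (P ((Zs ^ N) z)) ((Zs ^ N) z) : ℂ)) :=
              Real.sqrt_le_sqrt hb
      have hgt : Tendsto (fun N : ℕ =>
          Real.sqrt (‖P‖ * re (inner ℂ (P ((Zs ^ N) z)) ((Zs ^ N) z) : ℂ))) atTop (𝓝 0) := by
        have h1 : Tendsto (fun N : ℕ =>
            ‖P‖ * re (inner ℂ (P ((Zs ^ N) z)) ((Zs ^ N) z) : ℂ)) atTop (𝓝 0) := by
          simpa using (hbnd z).const_mul ‖P‖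
        have h2 := (Real.continuous_sqrt.tendsto 0).comp h1
        rw [Real.sqrt_zero] at h2
        exact h2
      exact squeeze_zero (fun N => norm_nonneg _) hub hgt
    have heq : (fun N : ℕ => ∑ n ∈ Finset.range N, (Z ^ n) (B (Bs ((Zs ^ n) z))))
        = fun N : ℕ => P z - ((Z ^ N) ∘L P ∘L (Zs ^ N)) z := by
      funext N
      have := key N z
      show _ = P z - (Z ^ N) (P ((Zs ^ N) z))
      rw [this]
      abel
    rw [heq]
    simpa using tendsto_const_nhds.sub hTz
  -- uniqueness
  have part1 : ∀ P' : 𝒵 →L[ℂ] 𝒵,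
      P' = Z.comp (P'.comp Zs) + B.comp Bs → P' = P := by
    intro P' hP'
    set D : 𝒵 →L[ℂ] 𝒵 := P' - P with hDdef
    have hD : ∀ w : 𝒵, D w = Z (D (Zs w)) := by
      intro w
      have h1 : P' w = Z (P' (Zs w)) + B (Bs w) := by
        conv_lhs => rw [hP']
        rfl
      have h2 := hPz w
      simp only [hDdef, ContinuousLinearMap.sub_apply, h1, h2, map_sub]
      abel
    have hDN : ∀ (N : ℕ) (w : 𝒵), D w = (Z ^ N) (D ((Zs ^ N) w)) := by
      intro N
      induction N with
      | zero => intro w; simp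
      | succ N ih =>
        intro w
        rw [ih w, hD ((Zs ^ N) w)]
        rw [pow_succ Z, pow_succ' Zs]
        simp [mul_apply]
    have hzero : ∀ z : 𝒵, D z = 0 := by
      intro z
      have hb : ∀ N : ℕ, ‖D z‖ ^ 2 ≤ ‖D‖ * (‖(Zs ^ N) z‖ * ‖(Zs ^ N) (D z)‖) := by
        intro N
        have h1 : (‖D z‖ ^ 2 : ℝ) = re (inner ℂ (D z) (D z) : ℂ) := by
          rw [inner_self_eq_norm_sq]
        have h2 : (inner ℂ (D z) (D z) : ℂ) = inner ℂ (D ((Zs ^ N) z)) ((Zs ^ N) (D z)) := by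
          rw [← hadj N (D ((Zs ^ N) z)) (D z), ← hDN N z]
        rw [h1, h2]
        calc re (inner ℂ (D ((Zs ^ N) z)) ((Zs ^ N) (D z)) : ℂ)
            ≤ ‖D ((Zs ^ N) z)‖ * ‖(Zs ^ N) (D z)‖ := re_inner_le_norm _ _
          _ ≤ ‖D‖ * (‖(Zs ^ N) z‖ * ‖(Zs ^ N) (D z)‖) := by
              have h3 := D.le_opNorm ((Zs ^ N) z)
              have h4 := norm_nonneg ((Zs ^ N) (D z))
              nlinarith [norm_nonneg ((Zs ^ N) z), norm_nonneg D]
      have ht : Tendsto (fun N : ℕ => ‖D‖ * (‖(Zs ^ N) z‖ * ‖(Zs ^ N) (D z)‖)) atTop (𝓝 0) := by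
        have h1 : Tendsto (fun N : ℕ => ‖(Zs ^ N) z‖) atTop (𝓝 0) :=
          tendsto_zero_iff_norm_tendsto_zero.mp (hZ z)
        have h2 : Tendsto (fun N : ℕ => ‖(Zs ^ N) (D z)‖) atTop (𝓝 0) :=
          tendsto_zero_iff_norm_tendsto_zero.mp (hZ (D z))
        have := (h1.mul h2).const_mul ‖D‖
        simpa using this
      have hle0 : ‖D z‖ ^ 2 ≤ 0 := ge_of_tendsto ht (Eventually.of_forall hb)
      have : ‖D z‖ ^ 2 = 0 := le_antisymm hle0 (sq_nonneg _)
      have : ‖D z‖ = 0 := by nlinarith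
      exact norm_eq_zero.mp this
    have : D = 0 := by
      ext z
      exact hzero z
    have : P' - P = 0 := this
    exact sub_eq_zero.mp this
  exact ⟨part1, part2, part3⟩

end
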